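/- arXiv:2205.13255 — 4 statements merged into one kernel-verified Lean document; each statement's English description precedes it below -/
import Mathlib

section
/- (Fano's inequality) Let X and Y be random variables taking values in finite sets 𝒳 and 𝒴, and let X̂ : 𝒴 → 𝒳 be any (measurable) classification rule. Let e = 1{X ≠ X̂(Y)}. Then the conditional entropy satisfies H(X | X̂(Y)) ≤ H(e) + P(e = 1)·log(|𝒳| − 1) ≤ log 2 + P(e = 1)·log|𝒳|. -/
open Real Finset Classical
noncomputable section
open scoped Classical

private lemma gibbs (a t : ℝ) (ha : 0 ≤ a) (ht : 0 ≤ t) (h : a ≠ 0 → t ≠ 0) :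
    Real.negMulLog a + a * Real.log t ≤ t - a := by
  rcases eq_or_lt_of_le ha with h0 | h0
  · rw [← h0]; simpa [Real.negMulLog] using ht
  · have ht' : 0 < t := lt_of_le_of_ne ht (Ne.symm (h h0.ne'))
    have hlog : Real.log (t / a) ≤ t / a - 1 := Real.log_le_sub_one_of_pos (by positivity)
    have hdiv : Real.log (t / a) = Real.log t - Real.log a := Real.log_div ht'.ne' h0.ne'
    have h1 : a * Real.log (t / a) ≤ a * (t / a - 1) := mul_le_mul_of_nonneg_left hlog h0.le
    have h2 : a * (t / a - 1) = t - a := by field_simp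
    rw [Real.negMulLog]
    nlinarith [h1, h2, hdiv]

/-- **Fano's inequality.** Let `X, Y` be random variables on finite sets `𝒳, 𝒴` with joint
probability mass function `p`, and `X̂ : 𝒴 → 𝒳` a classification rule.  With
`e = 1{X ≠ X̂(Y)}`, `Pe = P(e = 1)`, `H(e)` the binary entropy of `e` and `H(X | X̂(Y))` the
conditional entropy of `X` given `X̂(Y)` (natural logarithms, `0 log 0 = 0`), one has
`H(X | X̂(Y)) ≤ H(e) + Pe · log(|𝒳| - 1) ≤ log 2 + Pe · log |𝒳|`. -/
theorem fano_inequality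
    {𝒳 𝒴 : Type*} [Fintype 𝒳] [Fintype 𝒴] [Nonempty 𝒳] [Nonempty 𝒴]
    (p : 𝒳 × 𝒴 → ℝ) (hp : ∀ z, 0 ≤ p z) (hp1 : ∑ z : 𝒳 × 𝒴, p z = 1)
    (Xhat : 𝒴 → 𝒳)
    -- probability of error `P(e = 1)`
    (Pe : ℝ) (hPe : Pe = ∑ z ∈ univ.filter (fun z : 𝒳 × 𝒴 => z.1 ≠ Xhat z.2), p z)
    -- binary entropy of the error variable `e`
    (He : ℝ) (hHe : He = Real.negMulLog Pe + Real.negMulLog (1 - Pe))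
    -- joint law of `(X, X̂(Y))` and marginal law of `X̂(Y)`
    (Pj : 𝒳 → 𝒳 → ℝ) (hPj : ∀ x z, Pj x z = ∑ y ∈ univ.filter (fun y => Xhat y = z), p (x, y))
    (Pz : 𝒳 → ℝ) (hPz : ∀ z, Pz z = ∑ x : 𝒳, Pj x z)
    -- conditional entropy `H(X | X̂(Y))`
    (Hcond : ℝ)
    (hHcond : Hcond = ∑ x : 𝒳, ∑ z : 𝒳,
      (Real.negMulLog (Pj x z) + Pj x z * Real.log (Pz z))) :
    Hcond ≤ He + Pe * Real.log ((Fintype.card 𝒳 : ℝ) - 1) ∧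
    He + Pe * Real.log ((Fintype.card 𝒳 : ℝ) - 1)
      ≤ Real.log 2 + Pe * Real.log (Fintype.card 𝒳) := by
  classical
  set m : ℝ := (Fintype.card 𝒳 : ℝ) with hmdef
  have hPjnn : ∀ x z, 0 ≤ Pj x z := fun x z => by
    rw [hPj]; exact Finset.sum_nonneg fun y _ => hp _
  have hPznn : ∀ z, 0 ≤ Pz z := fun z => by
    rw [hPz]; exact Finset.sum_nonneg fun x _ => hPjnn x z
  have hPjlePz : ∀ x z, Pj x z ≤ Pz z := fun x z => by
    rw [hPz]; exact Finset.single_le_sum (fun x' _ => hPjnn x' z) (mem_univ x)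
  have hsumPj : ∑ x : 𝒳, ∑ z : 𝒳, Pj x z = 1 := by
    have h1 : ∀ x : 𝒳, ∑ z : 𝒳, Pj x z = ∑ y : 𝒴, p (x, y) := by
      intro x
      simp only [hPj]
      exact Finset.sum_fiberwise _ _ _
    rw [Finset.sum_congr rfl fun x _ => h1 x, ← Fintype.sum_prod_type, hp1]
  have hE : ∑ x : 𝒳, ∑ z : 𝒳, (if x = z then 0 else Pj x z) = Pe := by
    have key : ∀ x : 𝒳, ∑ z : 𝒳, (if x = z then 0 else Pj x z)
        = ∑ y : 𝒴, (if x = Xhat y then 0 else p (x, y)) := by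
      intro x
      have h1 : ∀ z : 𝒳, (if x = z then (0:ℝ) else Pj x z)
          = ∑ y ∈ univ.filter (fun y => Xhat y = z), (if x = Xhat y then 0 else p (x, y)) := by
        intro z
        rw [hPj]
        split_ifs with h
        · symm; apply Finset.sum_eq_zero; intro y hy
          rw [Finset.mem_filter] at hy
          rw [if_pos (by rw [hy.2, ← h])]
        · apply Finset.sum_congr rfl; intro y hy
          rw [Finset.mem_filter] at hy
          rw [if_neg (by rw [hy.2]; exact h)]
      rw [Finset.sum_congr rfl fun z _ => h1 z]
      exact Finset.sum_fiberwise _ _ _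
    rw [Finset.sum_congr rfl fun x _ => key x, hPe, Finset.sum_filter,
      Fintype.sum_prod_type]
    apply Finset.sum_congr rfl; intro x _
    apply Finset.sum_congr rfl; intro y _
    by_cases h : x = Xhat y <;> simp [h]
  have hD : ∑ x : 𝒳, ∑ z : 𝒳, (if x = z then Pj x z else 0) = 1 - Pe := by
    have h1 : ∀ x z : 𝒳, (if x = z then Pj x z else 0)
        = Pj x z - (if x = z then 0 else Pj x z) := by
      intro x z; split_ifs <;> ring
    simp only [h1, Finset.sum_sub_distrib]
    rw [hsumPj, hE]
  have hPe0 : 0 ≤ Pe := by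
    rw [hPe]; exact Finset.sum_nonneg fun z _ => hp z
  have hPe1 : Pe ≤ 1 := by
    have hDnn : 0 ≤ ∑ x : 𝒳, ∑ z : 𝒳, (if x = z then Pj x z else 0) :=
      Finset.sum_nonneg fun x _ => Finset.sum_nonneg fun z _ => by
        split_ifs; exacts [hPjnn x z, le_refl 0]
    linarith [hD ▸ hDnn]
  have hsumPz : ∑ z : 𝒳, Pz z = 1 := by
    simp only [hPz]; rw [Finset.sum_comm]; exact hsumPj
  have hdiagle : ∀ x : 𝒳, Pj x x ≤ 1 - Pe := by
    intro x
    rw [← hD]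
    have h1 : Pj x x = ∑ z : 𝒳, (if x = z then Pj x z else 0) := by
      rw [Finset.sum_ite_eq]; simp
    rw [h1]
    exact Finset.single_le_sum
      (f := fun x' : 𝒳 => ∑ z : 𝒳, (if x' = z then Pj x' z else 0))
      (fun i _ => Finset.sum_nonneg fun z _ => by
        split_ifs; exacts [hPjnn i z, le_refl 0]) (mem_univ x)
  have hoffle : ∀ x z : 𝒳, x ≠ z → Pj x z ≤ Pe := by
    intro x z hxz
    rw [← hE]
    calc Pj x z = (if x = z then 0 else Pj x z) := by rw [if_neg hxz]
      _ ≤ ∑ z' : 𝒳, (if x = z' then 0 else Pj x z') :=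
          Finset.single_le_sum (f := fun z' : 𝒳 => if x = z' then (0:ℝ) else Pj x z')
            (fun i _ => by by_cases h : x = i <;> simp [h, hPjnn x i]) (mem_univ z)
      _ ≤ ∑ x' : 𝒳, ∑ z' : 𝒳, (if x' = z' then 0 else Pj x' z') :=
          Finset.single_le_sum
            (f := fun x' : 𝒳 => ∑ z' : 𝒳, if x' = z' then (0:ℝ) else Pj x' z')
            (fun i _ => Finset.sum_nonneg fun j _ => by
              by_cases h : i = j <;> simp [h, hPjnn i j]) (mem_univ x)
  by_cases hcard : Fintype.card 𝒳 = 1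
  · -- degenerate case |𝒳| = 1
    have hsub : Subsingleton 𝒳 := Fintype.card_le_one_iff_subsingleton.mp (le_of_eq hcard)
    have hPe' : Pe = 0 := by
      rw [hPe]
      apply Finset.sum_eq_zero
      intro z hz
      simp only [Finset.mem_filter] at hz
      exact absurd (Subsingleton.elim z.1 (Xhat z.2)) hz.2
    have hHcond' : Hcond = 0 := by
      rw [hHcond]
      apply Finset.sum_eq_zero; intro x _
      apply Finset.sum_eq_zero; intro z _
      have hPzz : Pz z = Pj x z := by
        rw [hPz]
        apply Finset.sum_eq_single_of_mem x (mem_univ x)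
        intro b _ hb
        exact absurd (Subsingleton.elim b x) hb
      rw [hPzz, Real.negMulLog]; ring
    have hHe' : He = 0 := by rw [hHe, hPe']; simp [Real.negMulLog]
    constructor
    · rw [hHcond', hHe', hPe']; simp
    · rw [hHe', hPe']; simpa using Real.log_nonneg one_le_two
  · -- main case |𝒳| ≥ 2
    have hcard2 : 2 ≤ Fintype.card 𝒳 := by
      have := Fintype.card_pos (α := 𝒳); omega
    have hm2 : (2:ℝ) ≤ m := by rw [hmdef]; exact_mod_cast hcard2
    have hm1 : (0:ℝ) < m - 1 := by linarith
    have claimA : ∑ x : 𝒳, ∑ z : 𝒳, Pj x z *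
        (if x = z then Real.log (1 - Pe) else Real.log Pe - Real.log (m - 1))
        = (1 - Pe) * Real.log (1 - Pe) + Pe * Real.log Pe - Pe * Real.log (m - 1) := by
      have h1 : ∀ x z : 𝒳, Pj x z *
          (if x = z then Real.log (1 - Pe) else Real.log Pe - Real.log (m - 1))
          = Real.log (1 - Pe) * (if x = z then Pj x z else 0)
            + (Real.log Pe - Real.log (m - 1)) * (if x = z then 0 else Pj x z) := by
        intro x z; split_ifs <;> ring
      simp only [h1, Finset.sum_add_distrib, ← Finset.mul_sum]
      rw [hD, hE]; ring
    have claimB : ∀ x z : 𝒳, Real.negMulLog (Pj x z) + Pj x z * Real.log (Pz z)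
        + Pj x z * (if x = z then Real.log (1 - Pe) else Real.log Pe - Real.log (m - 1))
        ≤ Pz z * (if x = z then 1 - Pe else Pe / (m - 1)) - Pj x z := by
      intro x z
      by_cases hxz : x = z
      · subst hxz
        rw [if_pos rfl, if_pos rfl]
        rcases eq_or_lt_of_le (hPjnn x x) with h0 | h0
        · rw [← h0]
          simp only [Real.negMulLog, neg_zero, zero_mul, add_zero, zero_add, sub_zero, neg_mul]
          have : 0 ≤ Pz x * (1 - Pe) := mul_nonneg (hPznn x) (by linarith)
          simpa using this
        · have hPz0 : 0 < Pz x := lt_of_lt_of_le h0 (hPjlePz x x)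
          have h1Pe : 0 < 1 - Pe := lt_of_lt_of_le h0 (hdiagle x)
          have hg := gibbs (Pj x x) (Pz x * (1 - Pe)) (hPjnn x x) (by positivity)
            (fun _ => by positivity)
          rw [Real.log_mul hPz0.ne' h1Pe.ne', mul_add] at hg
          linarith
      · rw [if_neg hxz, if_neg hxz]
        rcases eq_or_lt_of_le (hPjnn x z) with h0 | h0
        · rw [← h0]
          simp only [Real.negMulLog, neg_zero, zero_mul, add_zero, zero_add, sub_zero, neg_mul]
          have : 0 ≤ Pz z * (Pe / (m - 1)) :=
            mul_nonneg (hPznn z) (div_nonneg hPe0 hm1.le)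
          simpa using this
        · have hPz0 : 0 < Pz z := lt_of_lt_of_le h0 (hPjlePz x z)
          have hPep : 0 < Pe := lt_of_lt_of_le h0 (hoffle x z hxz)
          have hg := gibbs (Pj x z) (Pz z * (Pe / (m - 1))) (hPjnn x z) (by positivity)
            (fun _ => by positivity)
          rw [Real.log_mul hPz0.ne' (by positivity), Real.log_div hPep.ne' hm1.ne',
            mul_add] at hg
          linarith
    have claimBsum : ∑ x : 𝒳, ∑ z : 𝒳,
        (Pz z * (if x = z then 1 - Pe else Pe / (m - 1)) - Pj x z) = 0 := by
      simp only [Finset.sum_sub_distrib]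
      rw [hsumPj]
      have h1 : ∑ x : 𝒳, ∑ z : 𝒳, Pz z * (if x = z then 1 - Pe else Pe / (m - 1)) = 1 := by
        rw [Finset.sum_comm]
        have h2 : ∀ z : 𝒳, ∑ x : 𝒳, Pz z * (if x = z then 1 - Pe else Pe / (m - 1))
            = Pz z := by
          intro z
          rw [← Finset.mul_sum]
          have h3 : ∑ x : 𝒳, (if x = z then (1 - Pe : ℝ) else Pe / (m - 1)) = 1 := by
            have h4 : ∀ x : 𝒳, (if x = z then (1 - Pe : ℝ) else Pe / (m - 1))
                = (if x = z then (1 - Pe - Pe / (m - 1) : ℝ) else 0) + Pe / (m - 1) := by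
              intro x; split_ifs <;> ring
            simp only [h4, Finset.sum_add_distrib, Finset.sum_ite_eq', mem_univ, if_true,
              Finset.sum_const, Finset.card_univ, nsmul_eq_mul]
            have hmm : (Fintype.card 𝒳 : ℝ) = m := rfl
            rw [hmm]
            field_simp
            ring
          rw [h3, mul_one]
        rw [Finset.sum_congr rfl fun z _ => h2 z]
        exact hsumPz
      rw [h1]; ring
    have main : Hcond + ((1 - Pe) * Real.log (1 - Pe) + Pe * Real.log Pe
        - Pe * Real.log (m - 1)) ≤ 0 := by
      have hsum : ∑ x : 𝒳, ∑ z : 𝒳, (Real.negMulLog (Pj x z) + Pj x z * Real.log (Pz z)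
          + Pj x z * (if x = z then Real.log (1 - Pe) else Real.log Pe - Real.log (m - 1)))
          ≤ ∑ x : 𝒳, ∑ z : 𝒳,
            (Pz z * (if x = z then 1 - Pe else Pe / (m - 1)) - Pj x z) :=
        Finset.sum_le_sum fun x _ => Finset.sum_le_sum fun z _ => claimB x z
      rw [claimBsum] at hsum
      have he : ∑ x : 𝒳, ∑ z : 𝒳, (Real.negMulLog (Pj x z) + Pj x z * Real.log (Pz z)
          + Pj x z * (if x = z then Real.log (1 - Pe) else Real.log Pe - Real.log (m - 1)))
          = Hcond + ((1 - Pe) * Real.log (1 - Pe) + Pe * Real.log Pe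
            - Pe * Real.log (m - 1)) := by
        simp only [Finset.sum_add_distrib]
        rw [← claimA, hHcond]
        simp only [Finset.sum_add_distrib]
      linarith [he ▸ hsum]
    have hHe2 : He = -(Pe * Real.log Pe) - (1 - Pe) * Real.log (1 - Pe) := by
      rw [hHe]; simp only [Real.negMulLog, neg_mul]; ring
    constructor
    · rw [hHe2]; linarith
    · have hbin : He ≤ Real.log 2 := by
        have g1 := gibbs Pe (1/2) hPe0 (by norm_num) (fun _ => by norm_num)
        have g2 := gibbs (1 - Pe) (1/2) (by linarith) (by norm_num) (fun _ => by norm_num)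
        have hlh : Real.log (1/2 : ℝ) = - Real.log 2 := by
          rw [one_div, Real.log_inv]
        rw [hlh] at g1 g2
        rw [hHe]
        nlinarith [g1, g2]
      have hlog : Real.log (m - 1) ≤ Real.log m := by
        apply Real.log_le_log hm1; linarith
      have := mul_le_mul_of_nonneg_left hlog hPe0
      linarith
end
end

section
/- (Gilbert–Varshamov-type packing of the hypercube) For any integer k ≥ 1, there exists a family (x_i)_{i≤N} of N = ⌈exp(k/8)⌉ points in {0,1}^k such that for all i ≠ j, the Hamming distance d(x_i, x_j) = Σ_{l≤k} 1{(x_i)_l ≠ (x_j)_l} exceeds k/4. -/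
open Real Finset

noncomputable section
open scoped Classical

namespace HPaux

def d {k : ℕ} (y z : Fin k → Bool) : ℕ := (univ.filter fun l => y l ≠ z l).card

lemma d_symm {k : ℕ} (y z : Fin k → Bool) : d y z = d z y := by
  unfold d; congr 1; apply filter_congr; intro l _; simp [ne_comm]

lemma ball_card_le {k : ℕ} (m : ℕ) (y : Fin k → Bool) :
    (univ.filter fun z => d y z ≤ m).card ≤ ∑ i ∈ range (m+1), k.choose i := by
  have h1 : (univ.filter fun z => d y z ≤ m).card ≤
      ((range (m+1)).biUnion fun i => powersetCard i (univ : Finset (Fin k))).card := by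
    apply card_le_card_of_injOn (fun z => univ.filter fun l => y l ≠ z l)
    · intro z hz
      simp only [mem_coe, mem_filter, mem_univ, true_and] at hz
      simp only [mem_coe, mem_biUnion, mem_range, mem_powersetCard]
      exact ⟨d y z, Nat.lt_succ_of_le hz, filter_subset _ _, rfl⟩
    · intro z1 _ z2 _ he
      simp only at he
      funext l
      have hl : (y l ≠ z1 l) ↔ (y l ≠ z2 l) := by
        constructor
        · intro h
          have : l ∈ univ.filter fun l => y l ≠ z2 l := by
            rw [← he]; simp [h]
          simpa using this
        · intro h
          have : l ∈ univ.filter fun l => y l ≠ z1 l := by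
            rw [he]; simp [h]
          simpa using this
      revert hl
      cases y l <;> cases z1 l <;> cases z2 l <;> simp
  refine h1.trans ((card_biUnion_le).trans ?_)
  apply sum_le_sum
  intro i _
  simp [card_powersetCard]

lemma count_bound (k m : ℕ) (hm : m ≤ k) :
    3^k * ∑ i ∈ range (m+1), k.choose i ≤ 3^m * 4^k := by
  rw [mul_sum]
  have h1 : ∀ i ∈ range (m+1), 3^k * k.choose i ≤ 3^m * (3^(k-i) * k.choose i) := by
    intro i hi
    rw [mem_range, Nat.lt_succ_iff] at hi
    have hik : i ≤ k := hi.trans hm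
    have : (3:ℕ)^k = 3^i * 3^(k-i) := by rw [← pow_add]; congr 1; omega
    rw [this]
    have : (3:ℕ)^i ≤ 3^m := Nat.pow_le_pow_right (by norm_num) hi
    calc 3^i * 3^(k-i) * k.choose i ≤ 3^m * 3^(k-i) * k.choose i := by
          exact Nat.mul_le_mul_right _ (Nat.mul_le_mul_right _ this)
      _ = 3^m * (3^(k-i) * k.choose i) := by ring
  refine (sum_le_sum h1).trans ?_
  rw [← mul_sum]
  apply Nat.mul_le_mul_left
  have h4 : (4:ℕ)^k = ∑ i ∈ range (k+1), 3^(k-i) * k.choose i := by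
    have := add_pow (1:ℕ) 3 k
    norm_num at this
    rw [show (4:ℕ) = 1 + 3 by norm_num, this]
  rw [h4]
  apply sum_le_sum_of_subset
  exact range_subset_range.2 (by omega)

lemma exp_bound (k : ℕ) :
    Real.exp ((k:ℝ)/8) * (∑ i ∈ range (k/4+1), (k.choose i : ℝ)) ≤ 2^k := by
  set m := k / 4 with hm
  set V : ℝ := ∑ i ∈ range (m+1), (k.choose i : ℝ) with hV
  have hVnn : 0 ≤ V := sum_nonneg fun i _ => by positivity
  have hEnn : 0 ≤ Real.exp ((k:ℝ)/8) := (Real.exp_pos _).le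
  have hcount : (3:ℝ)^k * V ≤ 3^m * 4^k := by
    have := count_bound k m (by omega)
    have hc : ((3^k * ∑ i ∈ range (m+1), k.choose i : ℕ) : ℝ) ≤ ((3^m * 4^k : ℕ) : ℝ) :=
      Nat.cast_le.2 this
    push_cast at hc
    simpa [hV] using hc
  -- reduce to 8th powers
  have h8 : (Real.exp ((k:ℝ)/8) * V)^8 ≤ ((2:ℝ)^k)^8 := by
    have hexp8 : (Real.exp ((k:ℝ)/8))^8 = Real.exp (k:ℝ) := by
      rw [← Real.exp_nat_mul]
      congr 1
      push_cast
      ring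
    have hexp1 : Real.exp (k:ℝ) = (Real.exp 1)^k := by
      rw [← Real.exp_nat_mul]; norm_num
    have he1 : (256:ℝ) * Real.exp 1 ≤ 729 := by
      have := Real.exp_one_lt_d9
      nlinarith
    -- main chain after multiplying by positive c = 256^k * (3^k)^8
    have hc : (0:ℝ) < 256^k * ((3:ℝ)^k)^8 := by positivity
    rw [← mul_le_mul_iff_of_pos_right hc]
    have lhs_eq : (Real.exp ((k:ℝ)/8) * V)^8 * (256^k * ((3:ℝ)^k)^8)
        = ((256:ℝ) * Real.exp 1)^k * ((3:ℝ)^k * V)^8 := by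
      rw [mul_pow, hexp8, hexp1, mul_pow, mul_pow]
      ring
    rw [lhs_eq]
    have step1 : ((256:ℝ) * Real.exp 1)^k * ((3:ℝ)^k * V)^8
        ≤ (729:ℝ)^k * ((3:ℝ)^m * 4^k)^8 := by
      apply mul_le_mul
      · exact pow_le_pow_left₀ (by positivity) he1 k
      · apply pow_le_pow_left₀ (by positivity) hcount
      · positivity
      · positivity
    refine step1.trans ?_
    have h8m : 8 * m ≤ 2 * k := by omega
    have step2 : ((3:ℝ)^m * 4^k)^8 = (3:ℝ)^(8*m) * 4^(8*k) := by
      rw [mul_pow, ← pow_mul, ← pow_mul]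
      ring_nf
    have step3 : (3:ℝ)^(8*m) ≤ 3^(2*k) := pow_le_pow_right₀ (by norm_num) h8m
    have rhs_eq : ((2:ℝ)^k)^8 * (256^k * ((3:ℝ)^k)^8)
        = (729:ℝ)^k * ((3:ℝ)^(2*k) * 4^(8*k)) := by
      rw [show (729:ℝ) = 3^6 by norm_num, show (256:ℝ) = 2^8 by norm_num,
        show (4:ℝ) = 2^2 by norm_num]
      rw [← pow_mul, ← pow_mul, ← pow_mul, ← pow_mul, ← pow_mul]
      ring
    rw [rhs_eq]
    calc (729:ℝ)^k * ((3:ℝ)^m * 4^k)^8 = 729^k * ((3:ℝ)^(8*m) * 4^(8*k)) := by rw [step2]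
      _ ≤ 729^k * ((3:ℝ)^(2*k) * 4^(8*k)) := by
          apply mul_le_mul_of_nonneg_left _ (by positivity)
          exact mul_le_mul_of_nonneg_right step3 (by positivity)
  have := pow_le_pow_iff_left₀ (a := Real.exp ((k:ℝ)/8) * V) (b := (2:ℝ)^k)
    (mul_nonneg hEnn hVnn) (by positivity) (n := 8) (by norm_num)
  exact this.1 h8

lemma packing_aux {k : ℕ} (m : ℕ) :
    ∀ n : ℕ, (∀ j < n, j * ∑ i ∈ range (m+1), k.choose i < 2^k) →
    ∃ S : Finset (Fin k → Bool), S.card = n ∧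
      ∀ y ∈ S, ∀ z ∈ S, y ≠ z → m < d y z := by
  intro n
  induction n with
  | zero => intro _; exact ⟨∅, by simp⟩
  | succ n ih =>
    intro h
    obtain ⟨S, hcard, hS⟩ := ih (fun j hj => h j (by omega))
    set C := S.biUnion (fun y => univ.filter fun z => d y z ≤ m) with hC
    have hCcard : C.card < 2^k := by
      calc C.card ≤ ∑ y ∈ S, (univ.filter fun z => d y z ≤ m).card := card_biUnion_le
        _ ≤ ∑ y ∈ S, ∑ i ∈ range (m+1), k.choose i := sum_le_sum fun y _ => ball_card_le m y
        _ = n * ∑ i ∈ range (m+1), k.choose i := by rw [sum_const, hcard, smul_eq_mul]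
        _ < 2^k := h n (by omega)
    have : ∃ z : Fin k → Bool, z ∉ C := by
      by_contra hcon
      push_neg at hcon
      have : (univ : Finset (Fin k → Bool)).card ≤ C.card :=
        card_le_card (fun z _ => hcon z)
      rw [card_univ] at this
      simp [Fintype.card_fun] at this
      omega
    obtain ⟨z, hz⟩ := this
    have hzS : ∀ y ∈ S, m < d y z := by
      intro y hy
      by_contra hle
      push_neg at hle
      exact hz (mem_biUnion.2 ⟨y, hy, by simp [hle]⟩)
    have hznotin : z ∉ S := by
      intro hmem
      have := hzS z hmem
      unfold d at this
      simp at this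
    refine ⟨insert z S, by rw [card_insert_of_notMem hznotin, hcard], ?_⟩
    intro a ha b hb hab
    rcases mem_insert.1 ha with rfl | ha' <;> rcases mem_insert.1 hb with rfl | hb'
    · exact absurd rfl hab
    · rw [d_symm]; exact hzS b hb'
    · exact hzS a ha'
    · exact hS a ha' b hb' hab

end HPaux

/-- **Gilbert–Varshamov-type packing of the hypercube.** For any `k ≥ 1` there exist
`N = ⌈exp(k/8)⌉` points of `{0,1}^k` whose pairwise Hamming distances all exceed `k/4`. -/
theorem hypercube_packing (k : ℕ) (hk : 1 ≤ k) :
    ∃ x : Fin (⌈Real.exp ((k : ℝ) / 8)⌉₊) → (Fin k → Bool),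
      ∀ i j, i ≠ j →
        (k : ℝ) / 4 < ((univ.filter fun l : Fin k => x i l ≠ x j l).card : ℝ) := by
  set N := ⌈Real.exp ((k : ℝ) / 8)⌉₊ with hN
  set m := k / 4 with hm
  have hkey : ∀ j < N, j * ∑ i ∈ range (m+1), k.choose i < 2^k := by
    intro j hj
    have hjr : (j:ℝ) < Real.exp ((k:ℝ)/8) := Nat.lt_ceil.1 hj
    have hV : 0 < ∑ i ∈ range (m+1), k.choose i := by
      apply sum_pos' (fun i _ => Nat.zero_le _)
      exact ⟨0, mem_range.2 (by omega), by simp⟩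
    have := HPaux.exp_bound k
    have hcast : (j:ℝ) * (∑ i ∈ range (m+1), (k.choose i : ℝ)) < 2^k := by
      calc (j:ℝ) * ∑ i ∈ range (m+1), (k.choose i : ℝ)
          < Real.exp ((k:ℝ)/8) * ∑ i ∈ range (m+1), (k.choose i : ℝ) := by
            apply mul_lt_mul_of_pos_right hjr
            exact_mod_cast hV
        _ ≤ 2^k := HPaux.exp_bound k
    exact_mod_cast hcast
  obtain ⟨S, hcard, hS⟩ := HPaux.packing_aux m N hkey
  set e := (S.equivFinOfCardEq hcard).symm with he
  refine ⟨fun i => (e i : Fin k → Bool), ?_⟩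
  intro i j hij
  have hne : (e i : Fin k → Bool) ≠ (e j : Fin k → Bool) := by
    intro hcon
    exact hij (e.injective (Subtype.ext hcon))
  have hd := hS _ (e i).2 _ (e j).2 hne
  unfold HPaux.d at hd
  have hk4 : k < 4 * (univ.filter fun l : Fin k => (e i : Fin k → Bool) l ≠ (e j : Fin k → Bool) l).card := by
    omega
  rw [div_lt_iff₀ (by norm_num : (0:ℝ) < 4)]
  calc (k:ℝ) < (4 * (univ.filter fun l : Fin k => (e i : Fin k → Bool) l ≠ (e j : Fin k → Bool) l).card : ℕ) := by exact_mod_cast hk4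
    _ = _ := by push_cast; ring
end
end

section
/- (Packing of infinite-dimensional ellipsoids) Let H = L²(ρ) and K a positive self-adjoint compact operator on H with ordered eigenvalues (λ_i)_{i∈ℕ} (with repetition) and orthonormal eigenvectors (u_i). Let ℱ = {f ∈ H : ‖K^{−1/2}f‖ ≤ M} for some M > 0. Then for any k ∈ ℕ*, there exist N ≥ exp(k/8) elements (f_i)_{i≤N} of ℱ such that for all i ≠ j, kM²/(Σ_{l≤k} λ_l^{−1}) ≤ ‖f_i − f_j‖² ≤ 4kM²/(Σ_{l≤k} λ_l^{−1}). -/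
open Real Finset

-- numeric: exp(1/8) * 3^(1/4) ≤ 3/2
lemma base_ineq : Real.exp (1/8) * (3:ℝ) ^ ((1:ℝ)/4) ≤ 3/2 := by
  have h2 : Real.exp (1/2) ≤ 27/16 := by
    nlinarith [Real.exp_one_lt_d9, Real.exp_pos (1/2 : ℝ),
      Real.exp_add (1/2 : ℝ) (1/2), Real.exp_one_gt_d9,
      sq_nonneg (Real.exp (1/2) - 27/16)]
  have h3 : ((3:ℝ) ^ ((1:ℝ)/4)) ^ (4:ℕ) = 3 := by
    rw [← Real.rpow_natCast ((3:ℝ) ^ ((1:ℝ)/4)) 4, ← Real.rpow_mul (by norm_num)]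
    norm_num
  have hbpos : (0:ℝ) < Real.exp (1/8) * (3:ℝ) ^ ((1:ℝ)/4) :=
    mul_pos (Real.exp_pos _) (Real.rpow_pos_of_pos (by norm_num) _)
  have h4 : (Real.exp (1/8) * (3:ℝ) ^ ((1:ℝ)/4)) ^ (4:ℕ) ≤ (3/2:ℝ)^(4:ℕ) := by
    rw [mul_pow, h3, ← Real.exp_nat_mul]
    norm_num
    nlinarith [h2, Real.exp_pos (1/2:ℝ)]
  exact le_of_pow_le_pow_left₀ (by norm_num) (by norm_num) h4

lemma packing_exists (k : ℕ) (hk : 1 ≤ k) :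
    ∃ S : Finset (Fin k → Bool), Real.exp ((k:ℝ)/8) ≤ S.card ∧
      ∀ a ∈ S, ∀ b ∈ S, a ≠ b → k ≤ 4 * hammingDist a b := by
  classical
  set good : Finset (Fin k → Bool) → Prop :=
    fun S => ∀ a ∈ S, ∀ b ∈ S, a ≠ b → k ≤ 4 * hammingDist a b with hgood
  set T : Finset (Finset (Fin k → Bool)) := univ.filter good with hT
  have hTne : T.Nonempty := ⟨∅, by simp [hT, hgood]⟩
  obtain ⟨S, hS, hmax⟩ := T.exists_max_image (fun S => S.card) hTne
  have hSgood : good S := (mem_filter.mp hS).2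
  refine ⟨S, ?_, hSgood⟩
  -- covering property
  have hcover : ∀ x : Fin k → Bool, ∃ s ∈ S, 4 * hammingDist x s < k := by
    intro x
    by_contra hcon
    push_neg at hcon
    have hxS : x ∉ S := fun hx => by
      have := hcon x hx; simp [hammingDist_self] at this; omega
    have hgood' : good (insert x S) := by
      intro a ha b hb hab
      rcases mem_insert.mp ha with h1 | h1 <;> rcases mem_insert.mp hb with h2 | h2
      · exact absurd (h1.trans h2.symm) hab
      · rw [h1]; exact hcon b h2
      · rw [h2, hammingDist_comm]; exact hcon a h1
      · exact hSgood a h1 b h2 hab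
    have hmem : insert x S ∈ T := mem_filter.mpr ⟨mem_univ _, hgood'⟩
    have := hmax _ hmem
    rw [card_insert_of_notMem hxS] at this
    omega
  -- ball size bound
  have hball : ∀ s : Fin k → Bool,
      ((univ.filter (fun x => 4 * hammingDist x s < k)).card : ℝ)
        ≤ (3:ℝ) ^ ((k:ℝ)/4) * (4/3)^k := by
    intro s
    have hsum : ∑ x : Fin k → Bool, ((1:ℝ)/3) ^ hammingDist x s = (4/3)^k := by
      have h1 : ∀ x : Fin k → Bool, ((1:ℝ)/3) ^ hammingDist x s
          = ∏ i : Fin k, (if x i ≠ s i then (1/3:ℝ) else 1) := by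
        intro x
        rw [← Finset.prod_filter]
        simp [hammingDist, Finset.prod_const]
      calc ∑ x : Fin k → Bool, ((1:ℝ)/3) ^ hammingDist x s
          = ∑ x : Fin k → Bool, ∏ i : Fin k, (if x i ≠ s i then (1/3:ℝ) else 1) := by
            exact Finset.sum_congr rfl fun x _ => h1 x
        _ = ∏ i : Fin k, ∑ b : Bool, (if b ≠ s i then (1/3:ℝ) else 1) :=
            (Fintype.prod_sum (fun i b => if b ≠ s i then (1/3:ℝ) else 1)).symm
        _ = ∏ _i : Fin k, (4/3:ℝ) := by
            refine Finset.prod_congr rfl fun i _ => ?_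
            rw [Fintype.sum_bool]
            cases h : s i <;> norm_num [h]
        _ = (4/3)^k := by rw [Finset.prod_const, Finset.card_univ, Fintype.card_fin]
    calc ((univ.filter (fun x => 4 * hammingDist x s < k)).card : ℝ)
        = ∑ x ∈ univ.filter (fun x => 4 * hammingDist x s < k), (1:ℝ) := by
          simp
      _ ≤ ∑ x ∈ univ.filter (fun x => 4 * hammingDist x s < k),
            (3:ℝ) ^ ((k:ℝ)/4) * ((1:ℝ)/3) ^ hammingDist x s := by
          refine Finset.sum_le_sum fun x hx => ?_
          have hd : (hammingDist x s : ℝ) < (k:ℝ)/4 := by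
            have h4 : (4:ℝ) * hammingDist x s < k := by
              exact_mod_cast (mem_filter.mp hx).2
            linarith
          have : (1:ℝ) ≤ (3:ℝ) ^ ((k:ℝ)/4 - hammingDist x s) :=
            Real.one_le_rpow (by norm_num) (by linarith)
          calc (1:ℝ) ≤ (3:ℝ) ^ ((k:ℝ)/4 - hammingDist x s) := this
            _ = (3:ℝ) ^ ((k:ℝ)/4) * ((1:ℝ)/3) ^ hammingDist x s := by
                rw [Real.rpow_sub (by norm_num)]
                rw [Real.rpow_natCast]
                rw [div_eq_mul_inv]
                congr 1
                simp [one_div, inv_pow]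
      _ ≤ ∑ x : Fin k → Bool, (3:ℝ) ^ ((k:ℝ)/4) * ((1:ℝ)/3) ^ hammingDist x s := by
          refine Finset.sum_le_sum_of_subset_of_nonneg (filter_subset _ _) ?_
          intro x _ _
          positivity
      _ = (3:ℝ) ^ ((k:ℝ)/4) * (4/3)^k := by
          rw [← Finset.mul_sum, hsum]
  -- counting
  have hcard : ((2:ℝ))^k ≤ (S.card : ℝ) * ((3:ℝ) ^ ((k:ℝ)/4) * (4/3)^k) := by
    have hsub : (univ : Finset (Fin k → Bool)) ⊆
        S.biUnion (fun s => univ.filter (fun x => 4 * hammingDist x s < k)) := by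
      intro x _
      obtain ⟨s, hs, hds⟩ := hcover x
      exact mem_biUnion.mpr ⟨s, hs, mem_filter.mpr ⟨mem_univ _, hds⟩⟩
    have h1 : (Fintype.card (Fin k → Bool) : ℝ) ≤
        ∑ s ∈ S, ((univ.filter (fun x => 4 * hammingDist x s < k)).card : ℝ) := by
      have := (Finset.card_le_card hsub).trans (Finset.card_biUnion_le)
      exact_mod_cast this
    have h2 : ∑ s ∈ S, ((univ.filter (fun x => 4 * hammingDist x s < k)).card : ℝ)
        ≤ ∑ _s ∈ S, (3:ℝ) ^ ((k:ℝ)/4) * (4/3)^k :=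
      Finset.sum_le_sum fun s _ => hball s
    have h3 : (Fintype.card (Fin k → Bool) : ℝ) = 2^k := by
      simp
    rw [h3] at h1
    calc ((2:ℝ))^k ≤ _ := h1
      _ ≤ _ := h2
      _ = (S.card : ℝ) * ((3:ℝ) ^ ((k:ℝ)/4) * (4/3)^k) := by
          rw [Finset.sum_const, nsmul_eq_mul]
  -- conclude
  have hden : (0:ℝ) < (3:ℝ) ^ ((k:ℝ)/4) * (4/3)^k := by positivity
  have hlow : ((3:ℝ)/2)^k / (3:ℝ) ^ ((k:ℝ)/4) ≤ (S.card : ℝ) := by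
    have hmul : ((3:ℝ)/2)^k * ((4:ℝ)/3)^k = 2^k := by rw [← mul_pow]; norm_num
    have h5 : ((3:ℝ)/2)^k * (4/3)^k ≤ ((S.card:ℝ) * (3:ℝ)^((k:ℝ)/4)) * (4/3)^k := by
      calc ((3:ℝ)/2)^k * ((4:ℝ)/3)^k = 2^k := hmul
        _ ≤ (S.card:ℝ) * ((3:ℝ)^((k:ℝ)/4) * (4/3)^k) := hcard
        _ = ((S.card:ℝ) * (3:ℝ)^((k:ℝ)/4)) * (4/3)^k := by ring
    have h6 := le_of_mul_le_mul_right h5 (pow_pos (show (0:ℝ)<4/3 by norm_num) k)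
    rw [div_le_iff₀ (Real.rpow_pos_of_pos (by norm_num) _)]
    exact h6
  refine le_trans ?_ hlow
  rw [le_div_iff₀ (Real.rpow_pos_of_pos (by norm_num) _)]
  have : Real.exp ((k:ℝ)/8) * (3:ℝ) ^ ((k:ℝ)/4)
      = (Real.exp (1/8) * (3:ℝ) ^ ((1:ℝ)/4))^k := by
    rw [mul_pow, ← Real.exp_nat_mul, ← Real.rpow_natCast ((3:ℝ) ^ ((1:ℝ)/4)) k,
      ← Real.rpow_mul (by norm_num)]
    ring_nf
  rw [this]
  exact pow_le_pow_left₀ (le_of_lt (by positivity)) base_ineq k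

/-- **Packing of infinite-dimensional ellipsoids.** Let `H` be a Hilbert space, `(u_i)` an
orthonormal family of eigenvectors of a positive compact operator with ordered eigenvalues
`(λ_i)`, and `ℱ = {f : ‖K^{-1/2} f‖ ≤ M}`; a function `f = ∑_{l<k} a_l • u_l` belongs to `ℱ`
iff `∑_{l<k} a_l² / λ_l ≤ M²`.  For every `k ≥ 1` there are `N ≥ exp(k/8)` elements of `ℱ`
with pairwise squared distances between `k M² / ∑_{l<k} λ_l⁻¹` and `4 k M² / ∑_{l<k} λ_l⁻¹`. -/
theorem ellipsoid_packing
    {H : Type*} [NormedAddCommGroup H] [InnerProductSpace ℝ H] [CompleteSpace H]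
    (u : ℕ → H) (hu : Orthonormal ℝ u)
    (lam : ℕ → ℝ) (hpos : ∀ i, 0 < lam i) (hdec : Antitone lam)
    (M : ℝ) (hM : 0 < M) (k : ℕ) (hk : 1 ≤ k) :
    ∃ N : ℕ, Real.exp ((k : ℝ) / 8) ≤ N ∧
      ∃ f : Fin N → H,
        (∀ i, ∃ a : Fin k → ℝ,
          f i = ∑ l : Fin k, a l • u l ∧ ∑ l : Fin k, (a l) ^ 2 / lam l ≤ M ^ 2) ∧
        ∀ i j, i ≠ j →
          (k : ℝ) * M ^ 2 / (∑ l : Fin k, (lam l)⁻¹) ≤ ‖f i - f j‖ ^ 2 ∧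
          ‖f i - f j‖ ^ 2 ≤ 4 * k * M ^ 2 / (∑ l : Fin k, (lam l)⁻¹) := by
  
  classical
  obtain ⟨S, hScard, hSgood⟩ := packing_exists k hk
  set c2 : ℝ := ∑ l : Fin k, (lam l)⁻¹ with hc2def
  have hc2 : 0 < c2 :=
    Finset.sum_pos (fun l _ => inv_pos.mpr (hpos l)) ⟨⟨0, hk⟩, mem_univ _⟩
  set r : ℝ := M / Real.sqrt c2 with hrdef
  have hr2 : r ^ 2 = M ^ 2 / c2 := by
    rw [hrdef, div_pow, Real.sq_sqrt hc2.le]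
  set ε : Bool → ℝ := fun b => if b then 1 else -1 with hεdef
  have hε1 : ∀ b, (ε b) ^ 2 = 1 := by intro b; cases b <;> simp [hεdef]
  set e := S.equivFin with hedef
  have hu' : Orthonormal ℝ (fun l : Fin k => u l) := hu.comp _ Fin.val_injective
  refine ⟨S.card, hScard,
    fun i => ∑ l : Fin k, (r * ε ((e.symm i : Fin k → Bool) l)) • u l, ?_, ?_⟩
  · intro i
    refine ⟨fun l => r * ε ((e.symm i : Fin k → Bool) l), rfl, le_of_eq ?_⟩
    have h1 : ∀ l : Fin k,
        (r * ε ((e.symm i : Fin k → Bool) l)) ^ 2 / lam l = M ^ 2 / c2 * (lam l)⁻¹ := by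
      intro l
      rw [mul_pow, hε1, mul_one, hr2, div_eq_mul_inv _ (lam _)]
    rw [Finset.sum_congr rfl fun l _ => h1 l, ← Finset.mul_sum, ← hc2def,
      div_mul_cancel₀ _ hc2.ne']
  · intro i j hij
    set a : Fin k → Bool := (e.symm i : Fin k → Bool) with hadef
    set b : Fin k → Bool := (e.symm j : Fin k → Bool) with hbdef
    have hab : a ≠ b := fun h =>
      hij (e.symm.injective (Subtype.ext (hadef ▸ hbdef ▸ h)))
    have hd : k ≤ 4 * hammingDist a b := hSgood _ (e.symm i).2 _ (e.symm j).2 hab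
    have hdk : hammingDist a b ≤ k := by simpa using hammingDist_le_card_fintype (x := a) (y := b)
    have hdiff : (∑ l : Fin k, (r * ε (a l)) • u ↑l) - (∑ l : Fin k, (r * ε (b l)) • u ↑l)
        = ∑ l : Fin k, (r * (ε (a l) - ε (b l))) • u ↑l := by
      rw [← Finset.sum_sub_distrib]
      exact Finset.sum_congr rfl fun l _ => by rw [← sub_smul, ← mul_sub]
    have hnorm : ‖∑ l : Fin k, (r * (ε (a l) - ε (b l))) • u ↑l‖ ^ 2
        = ∑ l : Fin k, (r * (ε (a l) - ε (b l))) ^ 2 := by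
      rw [← real_inner_self_eq_norm_sq]
      have := hu'.inner_sum (fun l => r * (ε (a l) - ε (b l)))
        (fun l => r * (ε (a l) - ε (b l))) univ
      rw [this]
      simp [sq]
    have hterm : ∀ l : Fin k, (r * (ε (a l) - ε (b l))) ^ 2
        = r ^ 2 * (if a l ≠ b l then (4:ℝ) else 0) := by
      intro l; cases h1 : a l <;> cases h2 : b l <;> simp [hεdef, h1, h2] <;> ring
    have hsum : ∑ l : Fin k, (r * (ε (a l) - ε (b l))) ^ 2
        = M ^ 2 / c2 * (4 * (hammingDist a b : ℝ)) := by
      rw [Finset.sum_congr rfl fun l _ => hterm l, ← Finset.mul_sum, hr2]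
      congr 1
      rw [Finset.sum_ite, Finset.sum_const, Finset.sum_const_zero, add_zero, nsmul_eq_mul]
      rw [hammingDist]
      push_cast
      ring
    have hval : ‖(∑ l : Fin k, (r * ε (a l)) • u ↑l) - ∑ l : Fin k, (r * ε (b l)) • u ↑l‖ ^ 2
        = M ^ 2 / c2 * (4 * (hammingDist a b : ℝ)) := by
      rw [hdiff, hnorm, hsum]
    have hM2c : (0:ℝ) < M ^ 2 / c2 := div_pos (pow_pos hM 2) hc2
    have hcast1 : (k : ℝ) ≤ 4 * (hammingDist a b : ℝ) := by exact_mod_cast hd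
    have hcast2 : (hammingDist a b : ℝ) ≤ k := by exact_mod_cast hdk
    constructor
    · calc (k : ℝ) * M ^ 2 / c2 = M ^ 2 / c2 * k := by ring
        _ ≤ M ^ 2 / c2 * (4 * (hammingDist a b : ℝ)) :=
            mul_le_mul_of_nonneg_left hcast1 hM2c.le
        _ = _ := hval.symm
    · calc ‖_ - _‖ ^ 2 = M ^ 2 / c2 * (4 * (hammingDist a b : ℝ)) := hval
        _ ≤ M ^ 2 / c2 * (4 * (k : ℝ)) :=
            mul_le_mul_of_nonneg_left (by linarith) hM2c.le
        _ = 4 * k * M ^ 2 / c2 := by ring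
end

section
/- (Order-preservation step for the median surrogate) Let 𝒴 be finite, p ∈ 𝒫(𝒴), θ ∈ ℝ^𝒴, and let σ be the transposition of two elements y, z ∈ 𝒴, with θ_σ defined by (θ_σ)_{y'} = θ_{σ(y')}. Then ℛ_S(θ) − ℛ_S(θ_σ) = (p(y) − p(z))·(√(A + 1 − 2θ_y) − √(A + 1 − 2θ_z)), where A = Σ_{y'∈𝒴} θ_{y'}² and ℛ_S(θ) = Σ_{y'} p(y')‖θ − e_{y'}‖. -/
open Real Finset

noncomputable section

theorem norm_aux {𝒴 : Type*} [Fintype 𝒴] [DecidableEq 𝒴]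
    (ξ : EuclideanSpace ℝ 𝒴) (y' : 𝒴) :
    ‖ξ - EuclideanSpace.single y' (1 : ℝ)‖
      = Real.sqrt ((∑ w : 𝒴, (ξ w) ^ 2) + 1 - 2 * ξ y') := by
  rw [EuclideanSpace.norm_eq]
  congr 1
  have : ∀ w : 𝒴, ‖(ξ - EuclideanSpace.single y' (1:ℝ)) w‖ ^ 2
      = ξ w ^ 2 + (if w = y' then 1 - 2 * ξ y' else 0) := by
    intro w
    simp only [PiLp.sub_apply, EuclideanSpace.single_apply, Real.norm_eq_abs, sq_abs]
    rcases eq_or_ne w y' with h | h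
    · subst h; simp; ring
    · simp [h]
  simp only [this, Finset.sum_add_distrib, Finset.sum_ite_eq' (Finset.univ) y',
    Finset.mem_univ, if_true]
  ring

/-- **Order-preservation step for the median surrogate.** For the surrogate risk
`ℛ_S(θ) = ∑_{y'} p(y') ‖θ - e_{y'}‖` on `ℝ^𝒴` and the swap `σ` of two labels `y ≠ z`,
`ℛ_S(θ) - ℛ_S(θ_σ) = (p(y) - p(z)) (√(A + 1 - 2θ_y) - √(A + 1 - 2θ_z))` where
`A = ∑_{y'} θ_{y'}²`. -/
theorem median_surrogate_swap
    {𝒴 : Type*} [Fintype 𝒴] [DecidableEq 𝒴]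
    (p : 𝒴 → ℝ) (hp : ∀ y, 0 ≤ p y) (hp1 : ∑ y : 𝒴, p y = 1)
    (RS : EuclideanSpace ℝ 𝒴 → ℝ)
    (hRS : ∀ θ, RS θ = ∑ y' : 𝒴, p y' * ‖θ - EuclideanSpace.single y' (1 : ℝ)‖)
    (y z : 𝒴) (hyz : y ≠ z)
    (θ θσ : EuclideanSpace ℝ 𝒴) (hθσ : ∀ y', θσ y' = θ (Equiv.swap y z y'))
    (A : ℝ) (hA : A = ∑ y' : 𝒴, (θ y') ^ 2) :
    RS θ - RS θσ
      = (p y - p z) * (Real.sqrt (A + 1 - 2 * θ y) - Real.sqrt (A + 1 - 2 * θ z)) := by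
  have hAσ : (∑ w : 𝒴, (θσ w) ^ 2) = A := by
    rw [hA]
    simp only [hθσ]
    exact Fintype.sum_equiv (Equiv.swap y z) _ _ (fun w => rfl)
  set g : 𝒴 → ℝ := fun w => Real.sqrt (A + 1 - 2 * θ w) with hg
  have h1 : RS θ = ∑ y' : 𝒴, p y' * g y' := by
    rw [hRS]
    refine Finset.sum_congr rfl fun w _ => ?_
    rw [norm_aux, ← hA]
  have h2 : RS θσ = ∑ y' : 𝒴, p (Equiv.swap y z y') * g y' := by
    rw [hRS]
    have : ∀ w, p w * ‖θσ - EuclideanSpace.single w (1:ℝ)‖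
        = p w * g (Equiv.swap y z w) := by
      intro w
      rw [norm_aux, hAσ, hθσ]
    simp only [this]
    refine (Fintype.sum_equiv (Equiv.swap y z) _ _ fun w => ?_).symm
    simp
  rw [h1, h2, ← Finset.sum_sub_distrib]
  have hzero : ∀ w ∈ (Finset.univ : Finset 𝒴), w ∉ ({y, z} : Finset 𝒴) →
      p w * g w - p (Equiv.swap y z w) * g w = 0 := by
    intro w _ hw
    simp only [Finset.mem_insert, Finset.mem_singleton, not_or] at hw
    rw [Equiv.swap_apply_of_ne_of_ne hw.1 hw.2]
    ring
  rw [← Finset.sum_subset (Finset.subset_univ {y, z}) hzero,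
    Finset.sum_pair hyz]
  simp [Equiv.swap_apply_left, Equiv.swap_apply_right, hg]
  ring
end
end
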